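/- The map F: 𝕊ⁿ → ℝ^{2n} given by F(x₁,…,x_{n+1}) = (1/(1+x_{n+1}²))·(x₁, x₁x_{n+1}, …, xₙ, xₙx_{n+1}) is a Lagrangian immersion: the pullback F*ω of the standard symplectic form ω = Σᵢ dxᵢ ∧ dyᵢ on ℝ^{2n} ≅ ℂⁿ vanishes identically. -/

import Mathlib

open Set

/-- The Whitney sphere immersion `F : 𝕊ⁿ ⊂ ℝ^{n+1} → ℂⁿ ≅ ℝ^{2n}`,
`F(x)ᵢ = (1/(1+x_{n+1}²))·(xᵢ + i xᵢ x_{n+1})`. -/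
noncomputable def whitneyMap (n : ℕ) (x : Fin (n + 1) → ℝ) : Fin n → ℂ := fun i =>
  (((1 + (x (Fin.last n)) ^ 2)⁻¹ * x i.castSucc : ℝ) : ℂ) *
    (1 + (x (Fin.last n) : ℂ) * Complex.I)

/-- The standard symplectic form `ω = Σᵢ dxᵢ ∧ dyᵢ` on `ℂⁿ`. -/
noncomputable def stdSymp (n : ℕ) (v w : Fin n → ℂ) : ℝ :=
  ∑ i, ((v i).re * (w i).im - (v i).im * (w i).re)

set_option maxHeartbeats 1000000 in
lemma comp_hasDeriv (n : ℕ) (x : Fin (n+1) → ℝ) (i : Fin n) :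
    ∃ D : (Fin (n+1) → ℝ) →L[ℝ] ℂ,
      HasFDerivAt (fun x : Fin (n+1) → ℝ => whitneyMap n x i) D x ∧
      ∀ v, D v = ((-(((1 + (x (Fin.last n))^2)^2)⁻¹ * (2 * x (Fin.last n) * v (Fin.last n))) * x i.castSucc
            + (1 + (x (Fin.last n))^2)⁻¹ * v i.castSucc : ℝ) : ℂ) * (1 + (x (Fin.last n) : ℂ) * Complex.I)
          + (((1 + (x (Fin.last n))^2)⁻¹ * x i.castSucc : ℝ) : ℂ) * ((v (Fin.last n) : ℂ) * Complex.I) := by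
  set L := Fin.last n with hLdef
  have hL : HasFDerivAt (fun x : Fin (n+1) → ℝ => x L)
      (ContinuousLinearMap.proj L : (Fin (n+1) → ℝ) →L[ℝ] ℝ) x :=
    (ContinuousLinearMap.proj L : (Fin (n+1) → ℝ) →L[ℝ] ℝ).hasFDerivAt
  have hi : HasFDerivAt (fun x : Fin (n+1) → ℝ => x i.castSucc)
      (ContinuousLinearMap.proj i.castSucc : (Fin (n+1) → ℝ) →L[ℝ] ℝ) x :=
    (ContinuousLinearMap.proj i.castSucc : (Fin (n+1) → ℝ) →L[ℝ] ℝ).hasFDerivAt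
  have hq : HasFDerivAt (fun x : Fin (n+1) → ℝ => 1 + (x L)^2)
      (x L • (ContinuousLinearMap.proj L : (Fin (n+1) → ℝ) →L[ℝ] ℝ)
       + x L • (ContinuousLinearMap.proj L : (Fin (n+1) → ℝ) →L[ℝ] ℝ)) x := by
    simpa [pow_two] using (hL.mul hL).const_add (1:ℝ)
  have hq0 : (1 + (x L)^2) ≠ 0 := by positivity
  have hqinv := (hasFDerivAt_inv' (𝕜 := ℝ) (R := ℝ) hq0).comp x hq
  have hg := hqinv.mul hi
  have hgc := Complex.ofRealCLM.hasFDerivAt.comp x hg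
  have h2' := ((Complex.ofRealCLM.comp
        (ContinuousLinearMap.proj L : (Fin (n+1) → ℝ) →L[ℝ] ℝ)).hasFDerivAt (x := x)).mul_const Complex.I
  have h2 := h2'.const_add (1 : ℂ)
  have h := hgc.mul h2
  refine ⟨_, h, fun v => ?_⟩
  simp [ContinuousLinearMap.smulRight_apply, ContinuousLinearMap.mulLeftRight_apply,
    smul_eq_mul, Complex.ofReal_mul, Complex.ofReal_add, Complex.ofReal_inv,
    Complex.ofReal_pow, Complex.ofReal_neg]
  have hq0C : (1 : ℂ) + (x L : ℂ) ^ 2 ≠ 0 := by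
    have : ((1 + x L ^ 2 : ℝ) : ℂ) ≠ 0 := Complex.ofReal_ne_zero.mpr hq0
    simpa using this
  simp only [← inv_pow]
  ring

theorem whitney_aux (n : ℕ) (x : Fin (n + 1) → ℝ)
    (hx : ∑ i, (x i) ^ 2 = 1)
    (v w : Fin (n + 1) → ℝ)
    (hv : ∑ i, v i * x i = 0) (hw : ∑ i, w i * x i = 0) :
    (∑ i, ((fderiv ℝ (whitneyMap n) x v i).re * (fderiv ℝ (whitneyMap n) x w i).im
      - (fderiv ℝ (whitneyMap n) x v i).im * (fderiv ℝ (whitneyMap n) x w i).re)) = 0 := by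
  choose D hD hDval using fun i => comp_hasDeriv n x i
  have hdiff : ∀ i : Fin n, DifferentiableAt ℝ (fun y => whitneyMap n y i) x :=
    fun i => (hD i).differentiableAt
  have hfd : ∀ (u : Fin (n+1) → ℝ) (i : Fin n), fderiv ℝ (whitneyMap n) x u i = D i u := by
    intro u i
    have hpi := fderiv_pi (𝕜 := ℝ) (φ := fun i y => whitneyMap n y i) (x := x) hdiff
    calc fderiv ℝ (whitneyMap n) x u i
        = (ContinuousLinearMap.pi fun i => fderiv ℝ (fun y => whitneyMap n y i) x) u i := by
          rw [← hpi]
      _ = D i u := by simp only [ContinuousLinearMap.pi_apply, (hD i).fderiv]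
  set L := Fin.last n with hL
  have hterm : ∀ i : Fin n,
      (fderiv ℝ (whitneyMap n) x v i).re * (fderiv ℝ (whitneyMap n) x w i).im
        - (fderiv ℝ (whitneyMap n) x v i).im * (fderiv ℝ (whitneyMap n) x w i).re
      = (1 + x L ^ 2)⁻¹ * (1 + x L ^ 2)⁻¹
          * (x i.castSucc * (v i.castSucc * w L - w i.castSucc * v L)) := by
    intro i
    rw [hfd v i, hfd w i, hDval i v, hDval i w]
    simp only [Complex.add_re, Complex.add_im, Complex.mul_re, Complex.mul_im,
      Complex.ofReal_re, Complex.ofReal_im, Complex.one_re, Complex.one_im,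
      Complex.I_re, Complex.I_im]
    ring
  rw [Finset.sum_congr rfl (fun i _ => hterm i), ← Finset.mul_sum]
  have hv' : ∑ i : Fin n, v i.castSucc * x i.castSucc = -(v L * x L) := by
    have h := Fin.sum_univ_castSucc (fun i => v i * x i)
    rw [hv] at h; linarith
  have hw' : ∑ i : Fin n, w i.castSucc * x i.castSucc = -(w L * x L) := by
    have h := Fin.sum_univ_castSucc (fun i => w i * x i)
    rw [hw] at h; linarith
  have hz : ∑ i : Fin n, x i.castSucc * (v i.castSucc * w L - w i.castSucc * v L) = 0 := by
    have e : ∀ i : Fin n, x i.castSucc * (v i.castSucc * w L - w i.castSucc * v L)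
        = (v i.castSucc * x i.castSucc) * w L - (w i.castSucc * x i.castSucc) * v L :=
      fun i => by ring
    rw [Finset.sum_congr rfl fun i _ => e i, Finset.sum_sub_distrib,
      ← Finset.sum_mul, ← Finset.sum_mul, hv', hw']
    ring
  rw [hz, mul_zero]


theorem whitney_is_lagrangian (n : ℕ) (x : Fin (n + 1) → ℝ)
    (hx : ∑ i, (x i) ^ 2 = 1)
    (v w : Fin (n + 1) → ℝ)
    (hv : ∑ i, v i * x i = 0) (hw : ∑ i, w i * x i = 0) :
    stdSymp n (fderiv ℝ (whitneyMap n) x v) (fderiv ℝ (whitneyMap n) x w) = 0 := by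
  simp only [stdSymp]
  exact whitney_aux n x hx v w hv hw
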